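/- For an incentive-compatible mechanism (q,t) (equivalently, ν = v∘q nondecreasing with U(θ) = U(θ̲) + ∫_{θ̲}^θ ν(s) ds), the no-lump-sum-transfer condition t(θ) ≥ 0 for all θ ∈ [θ̲,θ̄] holds if and only if U(θ̲) ≤ θ̲ · ν(θ̲). -/
import Mathlib


open MeasureTheory Set

/-- For an incentive-compatible mechanism (characterized by a nondecreasing
subutility ν = v ∘ q and the envelope formula), payments are nonnegative
everywhere iff U(θ̲) ≤ θ̲ · ν(θ̲). -/
theorem stmt_1
    (θl θh A : ℝ) (hθl : 0 < θl) (hlh : θl ≤ θh)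
    (v : ℝ → ℝ) (hv : StrictMonoOn v (Icc 0 A)) (hvc : ContinuousOn v (Icc 0 A))
    (q : ℝ → ℝ) (hq : ∀ θ ∈ Icc θl θh, q θ ∈ Icc 0 A)
    (t : ℝ → ℝ)
    (hmono : MonotoneOn (fun θ => v (q θ)) (Icc θl θh))
    (henv : ∀ θ ∈ Icc θl θh,
      θ * v (q θ) - t θ = (θl * v (q θl) - t θl) + ∫ s in θl..θ, v (q s)) :
    (∀ θ ∈ Icc θl θh, 0 ≤ t θ) ↔
      θl * v (q θl) - t θl ≤ θl * v (q θl) := by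
  constructor
  · intro h
    have := h θl ⟨le_refl _, hlh⟩
    linarith
  · intro h θ hθ
    have htl : 0 ≤ t θl := by linarith
    obtain ⟨h1, h2⟩ := hθ
    have hsub : Icc θl θ ⊆ Icc θl θh := Icc_subset_Icc le_rfl h2
    have hm : MonotoneOn (fun s => v (q s)) (Icc θl θ) := hmono.mono hsub
    have hint : IntervalIntegrable (fun s => v (q s)) volume θl θ := by
      apply MonotoneOn.intervalIntegrable
      rwa [uIcc_of_le h1]
    have hbound : (∫ s in θl..θ, v (q s)) ≤ (θ - θl) * v (q θ) := by
      have : (∫ s in θl..θ, v (q s)) ≤ ∫ s in θl..θ, v (q θ) := by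
        apply intervalIntegral.integral_mono_on h1 hint intervalIntegrable_const
        intro s hs
        exact hm hs ⟨h1, le_refl _⟩ hs.2
      simpa using this
    have hν : v (q θl) ≤ v (q θ) := hmono ⟨le_refl _, hlh⟩ ⟨h1, h2⟩ h1
    have he := henv θ ⟨h1, h2⟩
    nlinarith [mul_nonneg hθl.le (sub_nonneg.mpr hν)]
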